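/- Under the distributed two-time-scale setup, for every k ≥ 0 the Frobenius norms of the consensus-error matrices satisfy ‖X̂_{k+1}‖ ≤ (σ + α_k)·‖X̂_k‖ + α_k·‖Ŷ_k‖ + √N·(R + C)·α_k. -/

import Mathlib

/-- The Euclidean norm of a vector (represented as a function into `ℝ`). -/
noncomputable def enormVec {n : ℕ} (v : Fin n → ℝ) : ℝ :=
  Real.sqrt (∑ i, v i ^ 2)

/-- The Frobenius norm of an `N×d` real matrix. -/
noncomputable def fnorm {N d : ℕ} (M : Matrix (Fin N) (Fin d) ℝ) : ℝ :=
  Real.sqrt (∑ i, ∑ j, M i j ^ 2)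

lemma enorm_nonneg {n : ℕ} (v : Fin n → ℝ) : 0 ≤ enormVec v := Real.sqrt_nonneg _
lemma fnorm_nonneg {N d : ℕ} (M : Matrix (Fin N) (Fin d) ℝ) : 0 ≤ fnorm M := Real.sqrt_nonneg _

lemma sq_enorm {n : ℕ} (v : Fin n → ℝ) : enormVec v ^ 2 = ∑ i, v i ^ 2 :=
  Real.sq_sqrt (by positivity)

noncomputable def toE {N d : ℕ} (M : Matrix (Fin N) (Fin d) ℝ) :
    EuclideanSpace ℝ (Fin N × Fin d) :=
  (WithLp.equiv 2 (Fin N × Fin d → ℝ)).symm fun p => M p.1 p.2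

lemma fnorm_eq_norm {N d : ℕ} (M : Matrix (Fin N) (Fin d) ℝ) :
    fnorm M = ‖toE M‖ := by
  rw [EuclideanSpace.norm_eq]
  simp [fnorm, toE, Real.norm_eq_abs, sq_abs, Fintype.sum_prod_type]

lemma fnorm_sub_le {N d : ℕ} (A B : Matrix (Fin N) (Fin d) ℝ) :
    fnorm (A - B) ≤ fnorm A + fnorm B := by
  rw [fnorm_eq_norm, fnorm_eq_norm, fnorm_eq_norm]
  have h : toE (A - B) = toE A - toE B := rfl
  rw [h]; exact norm_sub_le _ _

lemma fnorm_add_le {N d : ℕ} (A B : Matrix (Fin N) (Fin d) ℝ) :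
    fnorm (A + B) ≤ fnorm A + fnorm B := by
  rw [fnorm_eq_norm, fnorm_eq_norm, fnorm_eq_norm]
  have h : toE (A + B) = toE A + toE B := rfl
  rw [h]; exact norm_add_le _ _

lemma fnorm_smul {N d : ℕ} (c : ℝ) (A : Matrix (Fin N) (Fin d) ℝ) :
    fnorm (c • A) = |c| * fnorm A := by
  rw [fnorm_eq_norm, fnorm_eq_norm]
  have h : toE (c • A) = c • toE A := rfl
  rw [h, norm_smul, Real.norm_eq_abs]

lemma sqrt_le_of_sq {a t : ℝ} (h : a ≤ t ^ 2) (ht : 0 ≤ t) : Real.sqrt a ≤ t :=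
  (Real.sqrt_le_sqrt h).trans (le_of_eq (by rw [Real.sqrt_sq ht]))

lemma fnorm_rows {N d : ℕ} (M : Matrix (Fin N) (Fin d) ℝ) :
    fnorm M = Real.sqrt (∑ i, enormVec (M i) ^ 2) := by
  unfold fnorm
  congr 1
  exact Finset.sum_congr rfl fun i _ => (sq_enorm (M i)).symm

lemma fnorm_cols {N d : ℕ} (M : Matrix (Fin N) (Fin d) ℝ) :
    fnorm M = Real.sqrt (∑ j, enormVec (fun i => M i j) ^ 2) := by
  unfold fnorm
  rw [Finset.sum_comm]
  congr 1
  exact Finset.sum_congr rfl fun j _ => (sq_enorm _).symm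

lemma fnorm_le_rows {N d : ℕ} (A B : Matrix (Fin N) (Fin d) ℝ)
    (h : ∀ i, enormVec (A i) ≤ enormVec (B i)) : fnorm A ≤ fnorm B := by
  rw [fnorm_rows, fnorm_rows]
  apply Real.sqrt_le_sqrt
  exact Finset.sum_le_sum fun i _ => pow_le_pow_left₀ (enorm_nonneg _) (h i) 2

lemma fnorm_le_of_rows_le {N d : ℕ} (A : Matrix (Fin N) (Fin d) ℝ) (c : ℝ) (hc : 0 ≤ c)
    (h : ∀ i, enormVec (A i) ≤ c) : fnorm A ≤ Real.sqrt N * c := by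
  rw [fnorm_rows]
  apply sqrt_le_of_sq _ (by positivity)
  have : ∑ i, enormVec (A i) ^ 2 ≤ ∑ _i : Fin N, c ^ 2 :=
    Finset.sum_le_sum fun i _ => pow_le_pow_left₀ (enorm_nonneg _) (h i) 2
  calc ∑ i, enormVec (A i) ^ 2 ≤ ∑ _i : Fin N, c ^ 2 := this
    _ = (N : ℝ) * c ^ 2 := by simp [Finset.sum_const, mul_comm]
    _ = (Real.sqrt N * c) ^ 2 := by
        rw [mul_pow, Real.sq_sqrt (by positivity)]

lemma fnorm_le_cols {N d : ℕ} (A B : Matrix (Fin N) (Fin d) ℝ) (σ : ℝ) (hσ : 0 ≤ σ)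
    (h : ∀ j, enormVec (fun i => A i j) ≤ σ * enormVec (fun i => B i j)) :
    fnorm A ≤ σ * fnorm B := by
  rw [fnorm_cols, fnorm_cols]
  apply sqrt_le_of_sq _ (by positivity)
  rw [mul_pow, Real.sq_sqrt (by positivity), Finset.mul_sum]
  refine Finset.sum_le_sum fun j _ => ?_
  have := pow_le_pow_left₀ (enorm_nonneg _) (h j) 2
  rwa [mul_pow] at this

lemma centered_sum_sq_le {N : ℕ} (hN : 0 < N) (t : Fin N → ℝ) :
    ∑ i, (t i - (1 / (N : ℝ)) * ∑ l, t l) ^ 2 ≤ ∑ i, t i ^ 2 := by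
  have hNR : (0 : ℝ) < N := by exact_mod_cast hN
  have expand : ∑ i, (t i - (1 / (N : ℝ)) * ∑ l, t l) ^ 2
      = ∑ i, t i ^ 2 - (∑ l, t l) ^ 2 / N := by
    have h1 : ∀ i ∈ Finset.univ, (t i - (1 / (N : ℝ)) * ∑ l, t l) ^ 2
        = t i ^ 2 - (2 * (1 / (N : ℝ)) * (∑ l, t l)) * t i
          + (1 / (N : ℝ)) ^ 2 * (∑ l, t l) ^ 2 := fun i _ => by ring
    rw [Finset.sum_congr rfl h1, Finset.sum_add_distrib, Finset.sum_sub_distrib,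
      ← Finset.mul_sum, Finset.sum_const, Finset.card_univ, Fintype.card_fin, nsmul_eq_mul]
    field_simp
    ring
  rw [expand]
  have : 0 ≤ (∑ l, t l) ^ 2 / N := by positivity
  linarith

lemma fnorm_centered_le {N d : ℕ} (hN : 0 < N) (b : Fin N → Fin d → ℝ) (R : ℝ) (hR : 0 ≤ R)
    (hb : ∀ i, enormVec (b i) ≤ R) :
    fnorm (Matrix.of fun i j => b i j - (1 / (N : ℝ)) * ∑ l, b l j) ≤ Real.sqrt N * R := by
  unfold fnorm
  apply sqrt_le_of_sq _ (by positivity)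
  have h1 : ∑ i, ∑ j, ((Matrix.of fun i j => b i j - (1 / (N : ℝ)) * ∑ l, b l j) i j) ^ 2
      = ∑ j, ∑ i, (b i j - (1 / (N : ℝ)) * ∑ l, b l j) ^ 2 := by
    rw [Finset.sum_comm]; simp [Matrix.of_apply]
  rw [h1]
  calc ∑ j, ∑ i, (b i j - (1 / (N : ℝ)) * ∑ l, b l j) ^ 2
      ≤ ∑ j, ∑ i, (b i j) ^ 2 :=
        Finset.sum_le_sum fun j _ => centered_sum_sq_le hN fun i => b i j
    _ = ∑ i, ∑ j, (b i j) ^ 2 := Finset.sum_comm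
    _ ≤ ∑ _i : Fin N, R ^ 2 := by
        refine Finset.sum_le_sum fun i _ => ?_
        have := pow_le_pow_left₀ (enorm_nonneg (b i)) (hb i) 2
        rwa [sq_enorm] at this
    _ = (N : ℝ) * R ^ 2 := by simp [Finset.sum_const, mul_comm]
    _ = (Real.sqrt N * R) ^ 2 := by rw [mul_pow, Real.sq_sqrt (by positivity)]


/-- Under the distributed two-time-scale setup, for every `k ≥ 0` the Frobenius
norms of the consensus-error matrices satisfy
`‖X̂_{k+1}‖ ≤ (σ + α_k)‖X̂_k‖ + α_k‖Ŷ_k‖ + √N(R+C)α_k`. -/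
theorem stmt_6
    {N d : ℕ} (hN : 0 < N) (hd : 0 < d) (R C : ℝ) (hR : 0 ≤ R) (hC : 0 ≤ C)
    (W V : Matrix (Fin N) (Fin N) ℝ)
    (hWnonneg : ∀ i j, 0 ≤ W i j) (hWrow : ∀ i, ∑ j, W i j = 1)
    (hWcol : ∀ j, ∑ i, W i j = 1)
    (hVnonneg : ∀ i j, 0 ≤ V i j) (hVrow : ∀ i, ∑ j, V i j = 1)
    (hVcol : ∀ j, ∑ i, V i j = 1)
    (σ : ℝ) (hσ0 : 0 < σ) (hσ1 : σ < 1)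
    (hWcontract : ∀ v : Fin N → ℝ, (∑ i, v i = 0) → enormVec (W.mulVec v) ≤ σ * enormVec v)
    (hVcontract : ∀ v : Fin N → ℝ, (∑ i, v i = 0) → enormVec (V.mulVec v) ≤ σ * enormVec v)
    (A11 A12 A21 A22 : Matrix (Fin d) (Fin d) ℝ)
    (hA11 : ∀ v, enormVec (A11.mulVec v) ≤ enormVec v)
    (hA12 : ∀ v, enormVec (A12.mulVec v) ≤ enormVec v)
    (hA21 : ∀ v, enormVec (A21.mulVec v) ≤ enormVec v)
    (hA22 : ∀ v, enormVec (A22.mulVec v) ≤ enormVec v)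
    (b1 b2 : Fin N → Fin d → ℝ)
    (hb1 : ∀ i, enormVec (b1 i) ≤ R) (hb2 : ∀ i, enormVec (b2 i) ≤ R)
    (ξ ψ : ℕ → Fin N → Fin d → ℝ)
    (hξ : ∀ k i, enormVec (ξ k i) ≤ C) (hψ : ∀ k i, enormVec (ψ k i) ≤ C)
    (α0 β0 : ℝ) (hβ0 : 0 < β0) (hβα : β0 ≤ α0)
    (α β : ℕ → ℝ)
    (hα : ∀ k, α k = α0 / ((k : ℝ) + 1) ^ ((2 : ℝ) / 3))
    (hβ : ∀ k, β k = β0 / ((k : ℝ) + 1))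
    (x y : ℕ → Fin N → Fin d → ℝ)
    (hx0 : ∀ i, x 0 i = 0) (hy0 : ∀ i, y 0 i = 0)
    (hxrec : ∀ k i, x (k + 1) i =
      (∑ j, W i j • x k j) -
        α k • (A11.mulVec (x k i) + A12.mulVec (y k i) - b1 i + ξ k i))
    (hyrec : ∀ k i, y (k + 1) i =
      (∑ j, V i j • y k j) -
        β k • (A21.mulVec (x k i) + A22.mulVec (y k i) - b2 i + ψ k i))
    (xbar ybar : ℕ → Fin d → ℝ)
    (hxbar : ∀ k, xbar k = (1 / (N : ℝ)) • ∑ i, x k i)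
    (hybar : ∀ k, ybar k = (1 / (N : ℝ)) • ∑ i, y k i)
    (Xhat Yhat : ℕ → Matrix (Fin N) (Fin d) ℝ)
    (hXhat : ∀ k, Xhat k = Matrix.of fun i j => x k i j - xbar k j)
    (hYhat : ∀ k, Yhat k = Matrix.of fun i j => y k i j - ybar k j)
    (k : ℕ) :
    fnorm (Xhat (k + 1)) ≤ (σ + α k) * fnorm (Xhat k) + α k * fnorm (Yhat k)
      + Real.sqrt N * (R + C) * α k := by
  have hNR : (0 : ℝ) < N := by exact_mod_cast hN
  have hα0 : 0 < α0 := lt_of_lt_of_le hβ0 hβα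
  have hαpos : 0 < α k := by rw [hα k]; positivity
  -- abbreviations
  obtain ⟨u, hu⟩ : ∃ u : Fin N → Fin d → ℝ,
      u = fun i => A11.mulVec (x k i) + A12.mulVec (y k i) - b1 i + ξ k i := ⟨_, rfl⟩
  obtain ⟨ub, hub⟩ : ∃ ub : Fin d → ℝ, ub = (1 / (N : ℝ)) • ∑ i, u i := ⟨_, rfl⟩
  have hui : ∀ i, u i = A11.mulVec (x k i) + A12.mulVec (y k i) - b1 i + ξ k i := by
    intro i; rw [hu]
  -- rows of Xhat, Yhat
  have rowX : ∀ K i, Xhat K i = x K i - xbar K := by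
    intro K i; funext j; rw [hXhat]; rfl
  have rowY : ∀ K i, Yhat K i = y K i - ybar K := by
    intro K i; funext j; rw [hYhat]; rfl
  -- recursion for x
  have hxk1 : ∀ i, x (k + 1) i = (∑ l, W i l • x k l) - α k • u i := by
    intro i; rw [hui]; exact hxrec k i
  -- sum over agents
  have hsum : ∑ i, x (k + 1) i = (∑ l, x k l) - α k • ∑ i, u i := by
    simp only [hxk1]
    rw [Finset.sum_sub_distrib, ← Finset.smul_sum]
    congr 1
    rw [Finset.sum_comm]
    refine Finset.sum_congr rfl fun l _ => ?_
    rw [← Finset.sum_smul, hWcol l, one_smul]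
  -- mean recursion
  have hxbar1 : xbar (k + 1) = xbar k - α k • ub := by
    rw [hxbar, hsum, smul_sub, ← hxbar k, smul_comm ((1 : ℝ) / N) (α k), ← hub]
  -- row recursion of Xhat
  have hrow : ∀ i, Xhat (k + 1) i = (∑ l, W i l • Xhat k l) - α k • (u i - ub) := by
    intro i
    rw [rowX (k + 1) i, hxk1 i, hxbar1]
    have h1 : (∑ l, W i l • Xhat k l) = (∑ l, W i l • x k l) - xbar k := by
      have h2 : ∀ l ∈ Finset.univ, W i l • Xhat k l = W i l • x k l - W i l • xbar k := by
        intro l _; rw [rowX k l, smul_sub]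
      rw [Finset.sum_congr rfl h2, Finset.sum_sub_distrib, ← Finset.sum_smul, hWrow i, one_smul]
    rw [h1, smul_sub]
    abel
  -- decomposition of the mean of u
  have hmulsum : ∀ (A : Matrix (Fin d) (Fin d) ℝ) (v : Fin N → Fin d → ℝ),
      A.mulVec (∑ i, v i) = ∑ i, A.mulVec (v i) := by
    intro A v
    funext j
    simp only [Matrix.mulVec, dotProduct, Finset.sum_apply, Finset.mul_sum]
    rw [Finset.sum_comm]
  have hub2 : ub = A11.mulVec (xbar k) + A12.mulVec (ybar k)
      - (1 / (N : ℝ)) • ∑ i, b1 i + (1 / (N : ℝ)) • ∑ i, ξ k i := by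
    have hs : ∑ i, u i = A11.mulVec (∑ i, x k i) + A12.mulVec (∑ i, y k i)
        - ∑ i, b1 i + ∑ i, ξ k i := by
      simp only [hu]
      rw [Finset.sum_add_distrib, Finset.sum_sub_distrib, Finset.sum_add_distrib,
        hmulsum, hmulsum]
    rw [hub, hs, hxbar, hybar, smul_add, smul_sub, smul_add,
      Matrix.mulVec_smul, Matrix.mulVec_smul]
  -- row difference identity
  have hud : ∀ i, u i - ub = A11.mulVec (Xhat k i) + A12.mulVec (Yhat k i)
      - (b1 i - (1 / (N : ℝ)) • ∑ l, b1 l) + (ξ k i - (1 / (N : ℝ)) • ∑ l, ξ k l) := by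
    intro i
    rw [hui, hub2, rowX k i, rowY k i, Matrix.mulVec_sub, Matrix.mulVec_sub]
    abel
  -- matrix decomposition
  obtain ⟨M1, hM1⟩ : ∃ M1 : Matrix (Fin N) (Fin d) ℝ,
      M1 = Matrix.of fun i j => (∑ l, W i l • Xhat k l) j := ⟨_, rfl⟩
  obtain ⟨E, hE⟩ : ∃ E : Matrix (Fin N) (Fin d) ℝ,
      E = Matrix.of fun i j => (u i - ub) j := ⟨_, rfl⟩
  obtain ⟨M2, hM2⟩ : ∃ M2 : Matrix (Fin N) (Fin d) ℝ,
      M2 = Matrix.of fun i j => A11.mulVec (Xhat k i) j := ⟨_, rfl⟩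
  obtain ⟨M3, hM3⟩ : ∃ M3 : Matrix (Fin N) (Fin d) ℝ,
      M3 = Matrix.of fun i j => A12.mulVec (Yhat k i) j := ⟨_, rfl⟩
  obtain ⟨M4, hM4⟩ : ∃ M4 : Matrix (Fin N) (Fin d) ℝ,
      M4 = Matrix.of fun i j => b1 i j - (1 / (N : ℝ)) * ∑ l, b1 l j := ⟨_, rfl⟩
  obtain ⟨M5, hM5⟩ : ∃ M5 : Matrix (Fin N) (Fin d) ℝ,
      M5 = Matrix.of fun i j => ξ k i j - (1 / (N : ℝ)) * ∑ l, ξ k l j := ⟨_, rfl⟩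
  have hXsplit : Xhat (k + 1) = M1 - α k • E := by
    ext i j
    rw [Matrix.sub_apply, Matrix.smul_apply, hM1, hE, Matrix.of_apply, Matrix.of_apply]
    have h := congrFun (hrow i) j
    simpa [smul_eq_mul] using h
  have hM1bound : fnorm M1 ≤ σ * fnorm (Xhat k) := by
    apply fnorm_le_cols _ _ σ (le_of_lt hσ0)
    intro j
    have hcol : (fun i => M1 i j) = W.mulVec (fun l => Xhat k l j) := by
      funext i
      rw [hM1]
      simp [Matrix.mulVec, dotProduct, Finset.sum_apply, smul_eq_mul]
    have hx2 : xbar k j = (1 / (N : ℝ)) * ∑ i, x k i j := by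
      rw [hxbar]; simp [Finset.sum_apply]
    have hzero : ∑ i, (fun l => Xhat k l j) i = 0 := by
      simp only [hXhat, Matrix.of_apply]
      rw [Finset.sum_sub_distrib, Finset.sum_const, Finset.card_univ, Fintype.card_fin,
        nsmul_eq_mul, hx2]
      field_simp
      simp
    rw [hcol]
    exact hWcontract _ hzero
  have hEdecomp : E = M2 + M3 - M4 + M5 := by
    ext i j
    rw [Matrix.add_apply, Matrix.sub_apply, Matrix.add_apply, hE, hM2, hM3, hM4, hM5,
      Matrix.of_apply, Matrix.of_apply, Matrix.of_apply, Matrix.of_apply, Matrix.of_apply]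
    have h := congrFun (hud i) j
    simpa [Finset.sum_apply, smul_eq_mul] using h
  have hM2b : fnorm M2 ≤ fnorm (Xhat k) := by
    apply fnorm_le_rows
    intro i
    have h : M2 i = A11.mulVec (Xhat k i) := by funext j; rw [hM2]; rfl
    rw [h]; exact hA11 _
  have hM3b : fnorm M3 ≤ fnorm (Yhat k) := by
    apply fnorm_le_rows
    intro i
    have h : M3 i = A12.mulVec (Yhat k i) := by funext j; rw [hM3]; rfl
    rw [h]; exact hA12 _
  have hM4b : fnorm M4 ≤ Real.sqrt N * R := by
    rw [hM4]; exact fnorm_centered_le hN b1 R hR hb1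
  have hM5b : fnorm M5 ≤ Real.sqrt N * C := by
    rw [hM5]; exact fnorm_centered_le hN (ξ k) C hC (hξ k)
  have hEb : fnorm E ≤ fnorm (Xhat k) + fnorm (Yhat k) + Real.sqrt N * R + Real.sqrt N * C := by
    rw [hEdecomp]
    calc fnorm (M2 + M3 - M4 + M5) ≤ fnorm (M2 + M3 - M4) + fnorm M5 := fnorm_add_le _ _
      _ ≤ fnorm (M2 + M3) + fnorm M4 + fnorm M5 := by linarith [fnorm_sub_le (M2 + M3) M4]
      _ ≤ fnorm M2 + fnorm M3 + fnorm M4 + fnorm M5 := by linarith [fnorm_add_le M2 M3]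
      _ ≤ _ := by linarith
  have h0 : fnorm (Xhat (k + 1)) ≤ fnorm M1 + α k * fnorm E := by
    rw [hXsplit]
    have h := fnorm_sub_le M1 (α k • E)
    rwa [fnorm_smul, abs_of_pos hαpos] at h
  calc fnorm (Xhat (k + 1)) ≤ fnorm M1 + α k * fnorm E := h0
    _ ≤ σ * fnorm (Xhat k)
        + α k * (fnorm (Xhat k) + fnorm (Yhat k) + Real.sqrt N * R + Real.sqrt N * C) := by
        have h1 := mul_le_mul_of_nonneg_left hEb (le_of_lt hαpos)
        linarith
    _ = (σ + α k) * fnorm (Xhat k) + α k * fnorm (Yhat k) + Real.sqrt N * (R + C) * α k := by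
        ring
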